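/- arXiv:2107.03805 — 3 statements merged into one kernel-verified Lean document; each statement's English description precedes it below -/
import Mathlib

section
/- (Recurrence for the Taylor coefficients of ψ.) Set u_0 = −(1/2)∫₀¹ log φ(t) dt and u_k = −∫₀¹ e^{−2πikt} log φ(t) dt for k ≥ 1. Then the Taylor coefficients a_n of the inverse Szegő function ψ satisfy a_0 = e^{u_0} and, for every n ≥ 0, a_{n+1} = (1/(n+1)) Σ_{k=0}^{n} (k+1) u_{k+1} a_{n−k}. -/
open MeasureTheory Complex Filter ComplexConjugate
open scoped NNReal ENNReal

/-- The point `e^{2πit}` on the unit circle. -/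
noncomputable def circlePt (t : ℝ) : ℂ := Complex.exp (((2 * Real.pi * t : ℝ) : ℂ) * Complex.I)

/-- The inverse Szegő function `ψ(z) = exp(-(1/2)∫₀¹ ((e^{2πit}+z)/(e^{2πit}-z)) log φ(t) dt)`. -/
noncomputable def szegoPsi (φ : ℝ → ℝ) (z : ℂ) : ℂ :=
  Complex.exp (-(1/2 : ℂ) * ∫ t in (0:ℝ)..1,
    ((circlePt t + z) / (circlePt t - z)) * (Real.log (φ t) : ℂ))

/-- Fourier coefficients of the weight: `γ(k) = ∫₀¹ e^{2πikt} φ(t) dt`. -/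
noncomputable def toeplitzCoeff (φ : ℝ → ℝ) (k : ℤ) : ℂ :=
  ∫ t in (0:ℝ)..1, Complex.exp (((2 * Real.pi * (k : ℝ) * t : ℝ) : ℂ) * Complex.I) * (φ t : ℂ)

lemma circlePt_norm (t : ℝ) : ‖circlePt t‖ = 1 := by
  simp [circlePt, Complex.norm_exp]

lemma circlePt_ne_zero (t : ℝ) : circlePt t ≠ 0 := Complex.exp_ne_zero _

lemma circlePt_inv_pow (t : ℝ) (k : ℕ) :
    (circlePt t)⁻¹ ^ k
      = Complex.exp (-(((2 * Real.pi * (k : ℝ) * t : ℝ) : ℂ) * Complex.I)) := by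
  rw [circlePt, ← Complex.exp_neg, ← Complex.exp_nat_mul]
  congr 1
  push_cast
  ring

/-- Uniqueness of power-series coefficients: a series summing to zero on a ball has
zero coefficients. -/
lemma coeff_eq_zero_of_hasSum_zero {r : ℝ} (hr : 0 < r) {c : ℕ → ℂ}
    (h : ∀ z : ℂ, ‖z‖ < r → HasSum (fun n => c n * z ^ n) 0) : ∀ n, c n = 0 := by
  have hz0 : ‖((r / 2 : ℝ) : ℂ)‖ < r := by
    rw [Complex.norm_real, Real.norm_eq_abs, abs_of_pos (by linarith)]
    linarith
  have hsum := (h _ hz0).summable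
  have htend : Tendsto (fun n => ‖c n * ((r / 2 : ℝ) : ℂ) ^ n‖) atTop (nhds 0) := by
    simpa using (hsum.tendsto_atTop_zero).norm
  obtain ⟨C, hC⟩ := htend.bddAbove_range
  have hCb : ∀ n, ‖c n‖ * (r / 2) ^ n ≤ C := by
    intro n
    have := hC (Set.mem_range_self n)
    rwa [norm_mul, norm_pow, Complex.norm_real, Real.norm_eq_abs,
      abs_of_pos (by linarith)] at this
  set p := FormalMultilinearSeries.ofScalars ℂ c with hp
  have hrad : (ENNReal.ofReal (r / 2)) ≤ p.radius := by
    rw [ENNReal.ofReal_eq_coe_nnreal (by linarith : (0:ℝ) ≤ r / 2)]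
    refine p.le_radius_of_bound C fun n => ?_
    rw [hp, FormalMultilinearSeries.ofScalars_norm]
    calc ‖c n‖ * ((⟨r / 2, by linarith⟩ : ℝ≥0) : ℝ) ^ n = ‖c n‖ * (r / 2) ^ n := rfl
      _ ≤ C := hCb n
  have hball : HasFPowerSeriesOnBall (0 : ℂ → ℂ) p 0 (ENNReal.ofReal (r / 2)) := by
    refine ⟨hrad, ENNReal.ofReal_pos.2 (by linarith), fun {y} hy => ?_⟩
    have hy' : ‖y‖ < r / 2 := by
      rw [EMetric.mem_ball, edist_zero_right, ← ofReal_norm,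
        ENNReal.ofReal_lt_ofReal_iff (by linarith)] at hy
      exact hy
    have := h y (by linarith)
    simp only [Pi.zero_apply, hp, FormalMultilinearSeries.ofScalars_apply_eq,
      smul_eq_mul, zero_add]
    exact this
  have hzero : p = 0 := hball.hasFPowerSeriesAt.eq_zero
  intro n
  have := congrFun hzero n
  rwa [FormalMultilinearSeries.zero_apply, FormalMultilinearSeries.ofScalars_eq_zero] at this

/-- The exponent of the inverse Szegő function expands as a power series with
coefficients `u k`. -/
lemma exponent_hasSum (φ : ℝ → ℝ) (u : ℕ → ℂ)
    (hφmeas : Measurable φ)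
    (hSzego : IntervalIntegrable (fun t => Real.log (φ t)) volume 0 1)
    (hu0 : u 0 = -(1/2 : ℂ) * ((∫ t in (0:ℝ)..1, Real.log (φ t) : ℝ) : ℂ))
    (huk : ∀ k : ℕ, 1 ≤ k →
      u k = -∫ t in (0:ℝ)..1,
        Complex.exp (-(((2 * Real.pi * (k : ℝ) * t : ℝ) : ℂ) * Complex.I)) *
          (Real.log (φ t) : ℂ))
    {z : ℂ} (hz : ‖z‖ < 1) :
    HasSum (fun k : ℕ => u k * z ^ k)
      (-(1/2 : ℂ) * ∫ t in (0:ℝ)..1,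
        ((circlePt t + z) / (circlePt t - z)) * (Real.log (φ t) : ℂ)) := by
  set L : ℝ → ℝ := fun t => Real.log (φ t) with hL
  set c : ℕ → ℂ := fun k => if k = 0 then -(1/2 : ℂ) else -1 with hc
  set F : ℕ → ℝ → ℂ := fun k t => c k * (z * (circlePt t)⁻¹) ^ k * (L t : ℂ) with hF
  have hLmeas : Measurable L := Real.measurable_log.comp hφmeas
  have hcirc : Measurable circlePt := by
    apply Complex.measurable_exp.comp
    exact (Complex.measurable_ofReal.comp (by fun_prop)).mul measurable_const
  have hFmeas : ∀ k, AEStronglyMeasurable (F k)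
      (volume.restrict (Set.uIoc (0:ℝ) 1)) := by
    intro k
    refine Measurable.aestronglyMeasurable ?_
    exact ((measurable_const.mul (((measurable_const.mul hcirc.inv)).pow_const k)).mul
      (Complex.measurable_ofReal.comp hLmeas))
  have hinv_norm : ∀ t, ‖(circlePt t)⁻¹‖ = 1 := by
    intro t; rw [norm_inv, circlePt_norm]; norm_num
  have hFnorm : ∀ k t, ‖F k t‖ ≤ ‖z‖ ^ k * |L t| := by
    intro k t
    have hck : ‖c k‖ ≤ 1 := by
      by_cases h : k = 0 <;> simp [hc, h] <;> norm_num
    have : ‖F k t‖ = ‖c k‖ * ‖z‖ ^ k * |L t| := by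
      rw [hF]
      simp only [norm_mul, norm_pow, hinv_norm, mul_one, Complex.norm_real,
        Real.norm_eq_abs]
    rw [this]
    nlinarith [abs_nonneg (L t), pow_nonneg (norm_nonneg z) k, norm_nonneg (c k), hck,
      mul_nonneg (pow_nonneg (norm_nonneg z) k) (abs_nonneg (L t))]
  have key : HasSum (fun k => ∫ t in (0:ℝ)..1, F k t)
      (∫ t in (0:ℝ)..1, -(1/2 : ℂ) * (((circlePt t + z) / (circlePt t - z)) * (L t : ℂ))) := by
    refine intervalIntegral.hasSum_integral_of_dominated_convergence
      (fun k t => ‖z‖ ^ k * |L t|) hFmeas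
      (fun k => Eventually.of_forall fun t _ => hFnorm k t)
      (Eventually.of_forall fun t _ =>
        (summable_geometric_of_lt_one (norm_nonneg z) hz).mul_right _)
      ?_ (Eventually.of_forall fun t _ => ?_)
    · have : (fun t => ∑' k : ℕ, ‖z‖ ^ k * |L t|)
          = fun t => (∑' k : ℕ, ‖z‖ ^ k) * |L t| := by
        funext t; exact tsum_mul_right
      rw [this]
      exact (hSzego.abs).const_mul _
    · set w : ℂ := z * (circlePt t)⁻¹ with hw
      have hwn : ‖w‖ < 1 := by
        rw [hw, norm_mul, hinv_norm, mul_one]; exact hz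
      have hgeom : HasSum (fun k : ℕ => (-1 : ℂ) * w ^ k * (L t : ℂ))
          ((-1) * (1 - w)⁻¹ * (L t : ℂ)) :=
        ((hasSum_geometric_of_norm_lt_one hwn).mul_left (-1)).mul_right _
      have hone : HasSum (fun k : ℕ => if k = 0 then ((1/2 : ℂ) * (L t : ℂ)) else 0)
          ((1/2 : ℂ) * (L t : ℂ)) := hasSum_ite_eq 0 _
      have hadd := hgeom.add hone
      have hfun : (fun k : ℕ => (-1 : ℂ) * w ^ k * (L t : ℂ)
          + (if k = 0 then ((1/2 : ℂ) * (L t : ℂ)) else 0)) = fun k => F k t := by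
        funext k
        by_cases h : k = 0 <;> simp [hF, hc, h, hw, mul_pow] <;> ring
      rw [hfun] at hadd
      convert hadd using 1
      · rfl
      have hez : circlePt t - z ≠ 0 := by
        intro hcon
        have : ‖circlePt t‖ = ‖z‖ := by
          rw [sub_eq_zero] at hcon; rw [hcon]
        rw [circlePt_norm] at this
        rw [← this] at hz; exact lt_irrefl _ hz
      have h1w : (1 : ℂ) - w ≠ 0 := by
        intro hcon
        rw [sub_eq_zero] at hcon
        have : ‖w‖ = 1 := by rw [← hcon]; simp
        rw [this] at hwn; exact lt_irrefl _ hwn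
      have he : circlePt t ≠ 0 := circlePt_ne_zero t
      rw [hw]
      field_simp
      ring
  have hint : ∀ k, (∫ t in (0:ℝ)..1, F k t) = u k * z ^ k := by
    intro k
    match k with
    | 0 =>
      have : (fun t => F 0 t) = fun t => -(1/2 : ℂ) * (L t : ℂ) := by
        funext t; simp [hF, hc]
      rw [this, intervalIntegral.integral_const_mul, intervalIntegral.integral_ofReal,
        pow_zero, mul_one, hu0]
    | (k + 1) =>
      have : (fun t => F (k+1) t)
          = fun t => (-(z ^ (k+1))) *
            (Complex.exp (-(((2 * Real.pi * ((k+1 : ℕ) : ℝ) * t : ℝ) : ℂ) * Complex.I)) *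
              (L t : ℂ)) := by
        funext t
        rw [hF]
        simp only [hc, if_neg (Nat.succ_ne_zero k)]
        rw [mul_pow, ← circlePt_inv_pow]
        ring
      rw [this, intervalIntegral.integral_const_mul, huk (k+1) (Nat.le_add_left 1 k)]
      ring
  have hfinal : (fun k => ∫ t in (0:ℝ)..1, F k t) = fun k => u k * z ^ k := funext hint
  rw [hfinal] at key
  rwa [intervalIntegral.integral_const_mul] at key

/-- Facts about a power series with coefficients bounded by `A * q^n`, `1 ≤ q ≤ 4/3`,
on the ball of radius `1/2`. -/
lemma powser_facts {c : ℕ → ℂ} {A q : ℝ} (hq1 : 1 ≤ q) (hq2 : q ≤ 4/3)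
    (hc : ∀ n, ‖c n‖ ≤ A * q ^ n) {z : ℂ} (hz : ‖z‖ < 1/2) :
    HasDerivAt (fun w : ℂ => ∑' n : ℕ, c n * w ^ n)
      (∑' n : ℕ, ((n : ℂ) + 1) * c (n + 1) * z ^ n) z ∧
    HasSum (fun n : ℕ => ((n : ℂ) + 1) * c (n + 1) * z ^ n)
      (∑' n : ℕ, ((n : ℂ) + 1) * c (n + 1) * z ^ n) ∧
    Summable (fun n : ℕ => ‖((n : ℂ) + 1) * c (n + 1) * z ^ n‖) ∧
    Summable (fun n : ℕ => ‖c n * z ^ n‖) ∧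
    HasSum (fun n : ℕ => c n * z ^ n) (∑' n : ℕ, c n * z ^ n) := by
  have hA : 0 ≤ A := le_trans (norm_nonneg (c 0)) (by simpa using hc 0)
  have hq0 : 0 < q := lt_of_lt_of_le one_pos hq1
  have hvsum : Summable (fun n : ℕ => 2 * A * ((n : ℝ) * (2/3) ^ n)) := by
    apply Summable.mul_left
    have := summable_pow_mul_geometric_of_norm_lt_one (R := ℝ) 1
      (r := (2/3 : ℝ)) (by rw [Real.norm_eq_abs, abs_of_pos] <;> norm_num)
    simpa using this
  have hbound : ∀ (n : ℕ) (y : ℂ), y ∈ Metric.ball (0:ℂ) (1/2) →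
      ‖c n * ((n : ℂ) * y ^ (n - 1))‖ ≤ 2 * A * ((n : ℝ) * (2/3) ^ n) := by
    intro n y hy
    have hyn : ‖y‖ ≤ 1/2 := by
      rw [Metric.mem_ball, dist_zero_right] at hy; linarith
    match n with
    | 0 => simp [hA]
    | (m + 1) =>
      rw [norm_mul, norm_mul, norm_pow, norm_natCast]
      have h1 : ‖c (m+1)‖ ≤ A * q ^ (m+1) := hc _
      have h2 : ‖y‖ ^ (m + 1 - 1) ≤ (1/2 : ℝ) ^ m := by
        simpa using pow_le_pow_left₀ (norm_nonneg y) hyn m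
      have hn1 : (0:ℝ) ≤ (m:ℝ) + 1 := by positivity
      have hx : (0:ℝ) ≤ ((m:ℝ)+1) * (1/2 : ℝ)^m := by positivity
      have key : (4/3 : ℝ) ^ (m+1) * (1/2)^m = 2 * (2/3) ^ (m+1) := by
        have h23 : (4/3 : ℝ) ^ (m+1) * (1/2) ^ (m+1) = (2/3) ^ (m+1) := by
          rw [← mul_pow]; norm_num
        have h12 : ((1:ℝ)/2) ^ (m+1) = (1/2) * (1/2)^m := by rw [pow_succ]; ring
        rw [h12] at h23
        nlinarith [h23]
      have hq4 : q ^ (m+1) ≤ (4/3 : ℝ) ^ (m+1) := pow_le_pow_left₀ (le_of_lt hq0) hq2 (m+1)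
      calc ‖c (m+1)‖ * (((m+1 : ℕ) : ℝ) * ‖y‖ ^ (m + 1 - 1))
          ≤ A * q ^ (m+1) * (((m:ℝ)+1) * (1/2)^m) := by
            push_cast
            refine mul_le_mul h1 ?_ (by positivity) (by positivity)
            exact mul_le_mul_of_nonneg_left h2 hn1
        _ ≤ A * (4/3) ^ (m+1) * (((m:ℝ)+1) * (1/2)^m) :=
            mul_le_mul_of_nonneg_right (mul_le_mul_of_nonneg_left hq4 hA) hx
        _ = 2 * A * (((m:ℝ)+1) * (2/3) ^ (m+1)) := by
            linear_combination (A * ((m:ℝ)+1)) * key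
        _ = 2 * A * (((m+1 : ℕ) : ℝ) * (2/3) ^ (m+1)) := by push_cast; ring
  have hz' : z ∈ Metric.ball (0:ℂ) (1/2) := by
    rw [Metric.mem_ball, dist_zero_right]; exact hz
  have h0mem : (0:ℂ) ∈ Metric.ball (0:ℂ) (1/2) := Metric.mem_ball_self (by norm_num)
  have hsum0 : Summable (fun n : ℕ => c n * (0:ℂ) ^ n) := by
    apply summable_of_ne_finset_zero (s := {0})
    intro n hn
    have : n ≠ 0 := by simpa using hn
    simp [zero_pow this]
  have hderiv : HasDerivAt (fun w : ℂ => ∑' n : ℕ, c n * w ^ n)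
      (∑' n : ℕ, c n * ((n : ℂ) * z ^ (n - 1))) z := by
    refine hasDerivAt_tsum_of_isPreconnected hvsum Metric.isOpen_ball
      ((convex_ball _ _).isPreconnected) (fun n y _ => ?_) hbound h0mem hsum0 hz'
    exact (hasDerivAt_pow n y).const_mul (c n)
  have hdsummable : Summable (fun n : ℕ => c n * ((n : ℂ) * z ^ (n - 1))) := by
    apply Summable.of_norm
    exact Summable.of_nonneg_of_le (fun n => norm_nonneg _)
      (fun n => hbound n z hz') hvsum
  have hshift : HasSum (fun n : ℕ => ((n : ℂ) + 1) * c (n + 1) * z ^ n)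
      (∑' n : ℕ, c n * ((n : ℂ) * z ^ (n - 1))) := by
    have h1 : HasSum (fun n : ℕ => c n * ((n : ℂ) * z ^ (n - 1)))
        (∑' n : ℕ, c n * ((n : ℂ) * z ^ (n - 1))) := hdsummable.hasSum
    have h2 := (hasSum_nat_add_iff' (f := fun n : ℕ => c n * ((n : ℂ) * z ^ (n - 1))) 1).2 h1
    simp only [Finset.range_one, Finset.sum_singleton, Nat.cast_zero, zero_mul,
      mul_zero, sub_zero] at h2
    have hfun : (fun n : ℕ => ((n : ℂ) + 1) * c (n + 1) * z ^ n)
        = fun n : ℕ => c (n + 1) * (((n + 1 : ℕ) : ℂ) * z ^ (n + 1 - 1)) := by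
      funext n
      push_cast [Nat.add_sub_cancel]
      ring
    rw [hfun]
    exact h2
  have hsummable : Summable (fun n : ℕ => ‖c n * z ^ n‖) := by
    refine Summable.of_nonneg_of_le (fun n => norm_nonneg _) (fun n => ?_)
      (Summable.mul_left A (summable_geometric_of_lt_one
        (r := (2/3 : ℝ)) (by norm_num) (by norm_num)))
    have hqz : q ^ n * (1/2 : ℝ) ^ n ≤ (2/3) ^ n := by
      rw [← mul_pow]
      exact pow_le_pow_left₀ (by positivity) (by linarith) n
    rw [norm_mul, norm_pow]
    calc ‖c n‖ * ‖z‖ ^ n ≤ (A * q ^ n) * (1/2) ^ n :=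
          mul_le_mul (hc n) (pow_le_pow_left₀ (norm_nonneg z) hz.le n)
            (pow_nonneg (norm_nonneg z) n) (by positivity)
      _ = A * (q ^ n * (1/2) ^ n) := by ring
      _ ≤ A * (2/3) ^ n := mul_le_mul_of_nonneg_left hqz hA
  refine ⟨?_, ?_, ?_, hsummable, hsummable.of_norm.hasSum⟩
  · rw [hshift.tsum_eq]; exact hderiv
  · rw [hshift.tsum_eq]; exact hshift
  · have hfun : (fun n : ℕ => ‖((n : ℂ) + 1) * c (n + 1) * z ^ n‖)
        = fun n : ℕ => ‖c (n + 1) * (((n + 1 : ℕ) : ℂ) * z ^ (n + 1 - 1))‖ := by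
      funext n
      congr 1
      push_cast [Nat.add_sub_cancel]
      ring
    rw [hfun]
    exact hdsummable.norm.comp_injective (add_left_injective 1)

/-- recurrence for the Taylor coefficients of ψ: with
`u_0 = −(1/2)∫₀¹ log φ` and `u_k = −∫₀¹ e^{−2πikt} log φ(t) dt` (k ≥ 1), one has
`a_0 = e^{u_0}` and `a_{n+1} = (1/(n+1)) Σ_{k=0}^{n} (k+1) u_{k+1} a_{n−k}`. -/
theorem taylor_coeff_recurrence
    (φ : ℝ → ℝ) (a : ℕ → ℂ) (u : ℕ → ℂ)
    (hφmeas : Measurable φ)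
    (hφnonneg : ∀ t ∈ Set.Icc (0:ℝ) 1, 0 ≤ φ t)
    (hφprob : ∫ t in (0:ℝ)..1, φ t = 1)
    (hφp : ∃ p : ℝ, 1 < p ∧ IntervalIntegrable (fun t => φ t ^ p) volume 0 1)
    (hSzego : IntervalIntegrable (fun t => Real.log (φ t)) volume 0 1)
    -- a_n are the Taylor coefficients of the inverse Szegő function ψ
    (ha : ∀ z : ℂ, ‖z‖ < 1 → HasSum (fun n : ℕ => a n * z ^ n) (szegoPsi φ z))
    -- the coefficients u_k
    (hu0 : u 0 = -(1/2 : ℂ) * ((∫ t in (0:ℝ)..1, Real.log (φ t) : ℝ) : ℂ))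
    (huk : ∀ k : ℕ, 1 ≤ k →
      u k = -∫ t in (0:ℝ)..1,
        Complex.exp (-(((2 * Real.pi * (k : ℝ) * t : ℝ) : ℂ) * Complex.I)) *
          (Real.log (φ t) : ℂ)) :
    a 0 = Complex.exp (u 0) ∧
    ∀ n : ℕ, a (n + 1) =
      (1 / ((n : ℂ) + 1)) *
        ∑ k ∈ Finset.range (n + 1), ((k : ℂ) + 1) * u (k + 1) * a (n - k) := by
  have hpsi_eq : ∀ z : ℂ, ‖z‖ < 1 →
      szegoPsi φ z = Complex.exp (∑' k : ℕ, u k * z ^ k) := by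
    intro z hz
    rw [szegoPsi, ← (exponent_hasSum φ u hφmeas hSzego hu0 huk hz).tsum_eq]
  constructor
  · -- a 0 = exp (u 0)
    have h0 := ha 0 (by simp)
    have h1 : HasSum (fun n : ℕ => a n * (0:ℂ) ^ n) (a 0) := by
      have := hasSum_single (f := fun n : ℕ => a n * (0:ℂ) ^ n) 0
        (fun b hb => by simp [zero_pow hb])
      simpa using this
    have ha0 : a 0 = szegoPsi φ 0 := h1.unique h0
    have hval : szegoPsi φ 0 = Complex.exp (u 0) := by
      rw [szegoPsi, hu0]
      congr 1
      have hfun : (fun t => ((circlePt t + 0) / (circlePt t - 0)) * (Real.log (φ t) : ℂ))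
          = fun t => ((Real.log (φ t) : ℝ) : ℂ) := by
        funext t
        rw [add_zero, sub_zero, div_self (circlePt_ne_zero t), one_mul]
      rw [hfun, intervalIntegral.integral_ofReal]
    rw [ha0, hval]
  · -- the recurrence
    -- bound on u
    set C := ∫ t in (0:ℝ)..1, |Real.log (φ t)| with hCdef
    set M := max C ‖u 0‖ with hMdef
    have hubound : ∀ k, ‖u k‖ ≤ M * (1:ℝ) ^ k := by
      intro k
      rw [one_pow, mul_one]
      match k with
      | 0 => exact le_max_right _ _
      | (k + 1) =>
        refine le_trans ?_ (le_max_left _ _)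
        rw [huk (k+1) (Nat.le_add_left 1 k), norm_neg]
        refine le_trans (intervalIntegral.norm_integral_le_integral_norm (by norm_num)) ?_
        rw [hCdef]
        apply le_of_eq
        apply intervalIntegral.integral_congr
        intro t _
        simp [map_mul, Complex.norm_exp, Complex.norm_real]
    -- bound on a
    obtain ⟨A, hAbound⟩ : ∃ A, ∀ n, ‖a n‖ ≤ A * (4/3 : ℝ) ^ n := by
      have h34 : ‖((3/4 : ℝ) : ℂ)‖ < 1 := by
        rw [Complex.norm_real, Real.norm_eq_abs, abs_of_pos] <;> norm_num
      have hsum := (ha _ h34).summable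
      have htend : Tendsto (fun n => ‖a n * ((3/4 : ℝ) : ℂ) ^ n‖) atTop (nhds 0) := by
        simpa using hsum.tendsto_atTop_zero.norm
      obtain ⟨B, hB⟩ := htend.bddAbove_range
      refine ⟨B, fun n => ?_⟩
      have h1 := hB (Set.mem_range_self n)
      rw [norm_mul, norm_pow, Complex.norm_real, Real.norm_eq_abs,
        abs_of_pos (by norm_num : (0:ℝ) < 3/4)] at h1
      have h2 : ((3:ℝ)/4) ^ n * (4/3) ^ n = 1 := by rw [← mul_pow]; norm_num
      calc ‖a n‖ = ‖a n‖ * (((3:ℝ)/4) ^ n * (4/3) ^ n) := by rw [h2, mul_one]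
        _ = ‖a n‖ * ((3:ℝ)/4) ^ n * (4/3) ^ n := by ring
        _ ≤ B * (4/3) ^ n :=
            mul_le_mul_of_nonneg_right h1 (pow_nonneg (by norm_num) n)
    -- the coefficients of the recurrence vanish
    have hkey0 : ∀ z : ℂ, ‖z‖ < 1/2 →
        HasSum (fun n : ℕ =>
          ((∑ k ∈ Finset.range (n+1), ((k:ℂ)+1) * u (k+1) * a (n-k))
            - ((n:ℂ)+1) * a (n+1)) * z ^ n) 0 := by
      intro z hz
      have hz1 : ‖z‖ < 1 := lt_trans hz (by norm_num)
      obtain ⟨hUderiv, hUshift, hUnorm, hUsum_norm, hUsum⟩ :=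
        powser_facts (le_refl (1:ℝ)) (by norm_num) hubound hz
      obtain ⟨hSderiv, hSshift, hSnorm, hSsum_norm, hSsum⟩ :=
        powser_facts (q := (4/3 : ℝ)) (by norm_num) (le_refl _) hAbound hz
      have hSeq : ∀ w : ℂ, ‖w‖ < 1 →
          (∑' n : ℕ, a n * w ^ n) = Complex.exp (∑' k : ℕ, u k * w ^ k) := by
        intro w hw
        rw [(ha w hw).tsum_eq, hpsi_eq w hw]
      have hopen : IsOpen {w : ℂ | ‖w‖ < 1} := by
        have : {w : ℂ | ‖w‖ < 1} = Metric.ball (0:ℂ) 1 := by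
          ext w; simp [Metric.mem_ball, dist_zero_right]
        rw [this]; exact Metric.isOpen_ball
      have hev : (fun w : ℂ => ∑' n : ℕ, a n * w ^ n) =ᶠ[nhds z]
          fun w => Complex.exp (∑' k : ℕ, u k * w ^ k) :=
        Filter.eventuallyEq_of_mem (hopen.mem_nhds hz1) hSeq
      have hderivS2 : HasDerivAt (fun w : ℂ => ∑' n : ℕ, a n * w ^ n)
          (Complex.exp (∑' k : ℕ, u k * z ^ k)
            * (∑' n : ℕ, ((n:ℂ)+1) * u (n+1) * z ^ n)) z :=
        HasDerivAt.congr_of_eventuallyEq (hUderiv.cexp) hev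
      have hde := hSderiv.unique hderivS2
      have hexpU : Complex.exp (∑' k : ℕ, u k * z ^ k) = ∑' n : ℕ, a n * z ^ n :=
        (hSeq z hz1).symm
      have hprod := hasSum_sum_range_mul_of_summable_norm hUnorm hSsum_norm
      have hterm : (fun n : ℕ => ∑ k ∈ Finset.range (n+1),
            (((k:ℂ)+1) * u (k+1) * z ^ k) * (a (n-k) * z ^ (n-k)))
          = fun n : ℕ =>
            (∑ k ∈ Finset.range (n+1), ((k:ℂ)+1) * u (k+1) * a (n-k)) * z ^ n := by
        funext n
        rw [Finset.sum_mul]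
        apply Finset.sum_congr rfl
        intro k hk
        have hkn : k ≤ n := Nat.lt_succ_iff.mp (Finset.mem_range.mp hk)
        have hzz : z ^ k * z ^ (n - k) = z ^ n := by
          rw [← pow_add, Nat.add_sub_cancel' hkn]
        calc (((k:ℂ)+1) * u (k+1) * z ^ k) * (a (n-k) * z ^ (n-k))
            = (((k:ℂ)+1) * u (k+1) * a (n-k)) * (z ^ k * z ^ (n-k)) := by ring
          _ = (((k:ℂ)+1) * u (k+1) * a (n-k)) * z ^ n := by rw [hzz]
      rw [hterm] at hprod
      have hprod' : HasSum (fun n : ℕ =>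
          (∑ k ∈ Finset.range (n+1), ((k:ℂ)+1) * u (k+1) * a (n-k)) * z ^ n)
          (∑' n : ℕ, ((n:ℂ)+1) * a (n+1) * z ^ n) := by
        convert hprod using 1
        · rfl
        rw [hde, hexpU]
        ring
      have hsub := hprod'.sub hSshift
      rw [sub_self] at hsub
      have hfun : (fun n : ℕ =>
            ((∑ k ∈ Finset.range (n+1), ((k:ℂ)+1) * u (k+1) * a (n-k))
              - ((n:ℂ)+1) * a (n+1)) * z ^ n)
          = fun n : ℕ =>
            (∑ k ∈ Finset.range (n+1), ((k:ℂ)+1) * u (k+1) * a (n-k)) * z ^ n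
              - ((n:ℂ)+1) * a (n+1) * z ^ n := by
        funext n; ring
      rw [hfun]
      exact hsub
    have key := coeff_eq_zero_of_hasSum_zero (by norm_num : (0:ℝ) < 1/2) hkey0
    intro n
    have h := key n
    have hne : ((n:ℂ)+1) ≠ 0 := Nat.cast_add_one_ne_zero n
    have h' : (∑ k ∈ Finset.range (n+1), ((k:ℂ)+1) * u (k+1) * a (n-k))
        = ((n:ℂ)+1) * a (n+1) := sub_eq_zero.mp h
    rw [h', one_div, ← mul_assoc, inv_mul_cancel₀ hne, one_mul]
end

section
/- (Explicit inverse of the infinite tridiagonal hermitian Toeplitz matrix.) Let q ∈ ℂ with |q| < 1/2 and set c₀ = sqrt((1 + sqrt(1 − 4|q|²))/2). Let G be the infinite matrix with rows and columns indexed by positive integers defined by G_{k,j} = 1 if k = j, G_{k,j} = q if j − k = 1, G_{k,j} = conj(q) if j − k = −1, and G_{k,j} = 0 otherwise. Define B_{k,j} = (−1)^{j+k} c₀^{2(1−k−j)} conj(q)^{k−j} (c₀^{4j} − |q|^{2j}) / (c₀⁴ − |q|²) for j ≤ k, and B_{k,j} = conj(B_{j,k}) for j > k. Then B is the inverse of G: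 Σ_{m≥1} G_{k,m} B_{m,j} = δ_{k,j} and Σ_{m≥1} B_{k,m} G_{m,j} = δ_{k,j} for all k, j ≥ 1 (each sum has at most three nonzero terms in the first case, and is absolutely convergent in the second). -/
open MeasureTheory Complex Filter ComplexConjugate

lemma inv_shift' {C : ℂ} (hC : C ≠ 0) (M k : ℕ) : (C^M)⁻¹ = C^k * (C^(M+k))⁻¹ := by
  rw [pow_add, mul_inv, ← mul_assoc, mul_comm (C^k), mul_assoc,
    mul_inv_cancel₀ (pow_ne_zero k hC), mul_one]

lemma l_caseA (q qb C d : ℂ) (hC : C ≠ 0) (hCR : C^2 = C - q*qb) (m M : ℕ) :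
    qb * ((-qb)^m * C * (C^M)⁻¹ * d) + (-qb)^(m+1) * C * (C^(M+1))⁻¹ * d
      + q * ((-qb)^(m+2) * C * (C^(M+2))⁻¹ * d) = 0 := by
  rw [inv_shift' hC M 2, inv_shift' hC (M+1) 1, show M+1+1 = M+2 by ring]
  linear_combination (qb * (-qb)^m * C * (C^(M+2))⁻¹ * d) * hCR

lemma l_col (q qb C d e : ℂ) (hC : C ≠ 0) (hCR : C^2 = C - q*qb) (s M : ℕ) :
    qb * ((-q)^(s+2) * C * (C^M)⁻¹ * d) + (-q)^(s+1) * C * (C^(M+1))⁻¹ * (C^2*d + e)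
      + q * ((-q)^s * C * (C^(M+2))⁻¹ * (C^2*(C^2*d + e) + q*qb*e)) = 0 := by
  rw [inv_shift' hC M 2, inv_shift' hC (M+1) 1, show M+1+1 = M+2 by ring]
  linear_combination (q * (-q)^s * C * (C^2*d + e) * (C^(M+2))⁻¹) * hCR

lemma l_col1 (q qb C : ℂ) (hC : C ≠ 0) (hCR : C^2 = C - q*qb) (s M : ℕ) :
    (-q)^(s+1) * C * (C^M)⁻¹ + q * ((-q)^s * C * (C^(M+1))⁻¹ * (C^2 + q*qb)) = 0 := by
  rw [inv_shift' hC M 1]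
  linear_combination (q * (-q)^s * C * (C^(M+1))⁻¹) * hCR

lemma l_diag (q qb C d e : ℂ) (hC : C ≠ 0) (hCR : C^2 = C - q*qb) (n : ℕ)
    (hd : (C^2 - q*qb) * d = C^(2*n+2) - e) :
    qb * (-q * C * (C^(2*n+3))⁻¹ * d) + C * (C^(2*n+4))⁻¹ * (C^2*d + e)
      + q * (-qb * C * (C^(2*n+5))⁻¹ * (C^2*d + e)) = 1 := by
  have h5 : C^(2*n+5) * (C^(2*n+5))⁻¹ = 1 := mul_inv_cancel₀ (pow_ne_zero _ hC)
  rw [inv_shift' hC (2*n+3) 2, inv_shift' hC (2*n+4) 1,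
    show 2*n+3+2 = 2*n+5 by ring, show 2*n+4+1 = 2*n+5 by ring]
  linear_combination ((C^(2*n+5))⁻¹ * C^3) * hd - ((C^(2*n+5))⁻¹ * (d*C^3 + e*C)) * hCR + h5

lemma l_diag1 (q qb C : ℂ) (hC : C ≠ 0) (hCR : C^2 = C - q*qb) :
    C * (C^2)⁻¹ + q * (-qb * C * (C^3)⁻¹) = 1 := by
  have h3 : C^3 * (C^3)⁻¹ = 1 := mul_inv_cancel₀ (pow_ne_zero _ hC)
  rw [inv_shift' hC 2 1]
  linear_combination (-(C*(C^3)⁻¹))*hCR + h3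

/-- explicit inverse of the infinite tridiagonal hermitian Toeplitz matrix:
for |q| < 1/2, the matrix B with entries
`B_{k,j} = (−1)^{j+k} c₀^{2(1−k−j)} conj(q)^{k−j} (c₀^{4j} − |q|^{2j})/(c₀⁴ − |q|²)` (j ≤ k),
`B_{k,j} = conj(B_{j,k})` (j > k), is a two-sided inverse of the tridiagonal Toeplitz
matrix G with 1 on the diagonal and q, conj(q) on the first super/sub-diagonals. -/
theorem tridiagonal_toeplitz_inverse (q : ℂ) (hq : ‖q‖ < 1/2)
    (c₀ : ℝ) (hc₀ : c₀ = Real.sqrt ((1 + Real.sqrt (1 - 4 * ‖q‖ ^ 2)) / 2))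
    (G B : ℕ → ℕ → ℂ)
    (hG : ∀ k j : ℕ, G k j =
      if k = j then 1 else if j = k + 1 then q else if k = j + 1 then conj q else 0)
    (hB : ∀ k j : ℕ, 1 ≤ j → j ≤ k →
      B k j = (-1 : ℂ) ^ (j + k) * (c₀ : ℂ) ^ (2 * (1 - (k : ℤ) - (j : ℤ))) *
        (conj q) ^ (k - j) * ((c₀ : ℂ) ^ (4 * j) - (‖q‖ : ℂ) ^ (2 * j)) /
          ((c₀ : ℂ) ^ 4 - (‖q‖ : ℂ) ^ 2))
    (hBsym : ∀ k j : ℕ, 1 ≤ k → k < j → B k j = conj (B j k)) :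
    ∀ k j : ℕ, 1 ≤ k → 1 ≤ j →
      HasSum (fun m : ℕ => G k (m + 1) * B (m + 1) j) (if k = j then 1 else 0) ∧
      HasSum (fun m : ℕ => B k (m + 1) * G (m + 1) j) (if k = j then 1 else 0) := by
  -- real preliminaries
  have hq0 : (0:ℝ) ≤ ‖q‖ := norm_nonneg q
  have h4 : 0 < 1 - 4 * ‖q‖ ^ 2 := by nlinarith
  obtain ⟨s, hs⟩ : ∃ s : ℝ, s = Real.sqrt (1 - 4 * ‖q‖ ^ 2) := ⟨_, rfl⟩
  have hs2 : s ^ 2 = 1 - 4 * ‖q‖ ^ 2 := by rw [hs]; exact Real.sq_sqrt h4.le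
  have hspos : 0 < s := by rw [hs]; exact Real.sqrt_pos.2 h4
  have hc0sq : c₀ ^ 2 = (1 + s) / 2 := by rw [hc₀, ← hs]; exact Real.sq_sqrt (by positivity)
  have hc0pos : 0 < c₀ := by rw [hc₀]; apply Real.sqrt_pos.2; rw [← hs]; positivity
  have key1 : (c₀^2)^2 = c₀^2 - ‖q‖^2 := by rw [hc0sq]; linear_combination hs2/4
  have key2 : 0 < (c₀^2)^2 - ‖q‖^2 := by nlinarith
  -- complex constants
  obtain ⟨C, hCdef⟩ : ∃ C : ℂ, C = (c₀:ℂ)^2 := ⟨_, rfl⟩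
  obtain ⟨Rc, hRdef⟩ : ∃ Rc : ℂ, Rc = (‖q‖:ℂ)^2 := ⟨_, rfl⟩
  obtain ⟨D, hDdef⟩ : ∃ D : ℕ → ℂ, D = fun j => (C^(2*j) - Rc^j) / (C^2 - Rc) := ⟨_, rfl⟩
  have hc : (c₀:ℂ) ≠ 0 := by exact_mod_cast hc0pos.ne'
  have hC : C ≠ 0 := by rw [hCdef]; exact pow_ne_zero 2 hc
  have hqq : q * conj q = Rc := by
    rw [Complex.mul_conj, Complex.normSq_eq_norm_sq, hRdef]
    push_cast; ring
  have hCRR : C ^ 2 = C - Rc := by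
    rw [hCdef, hRdef]
    have := congrArg (fun x : ℝ => (x : ℂ)) key1
    push_cast at this ⊢
    exact this
  have hCR : C ^ 2 = C - q * conj q := by rw [hqq, hCRR]
  have hden : C ^ 2 - Rc ≠ 0 := by
    rw [hCdef, hRdef]
    intro h
    apply key2.ne'
    have h2 : ((((c₀^2)^2 - ‖q‖^2 : ℝ)) : ℂ) = 0 := by push_cast; linear_combination h
    exact_mod_cast h2
  have hconjC : conj C = C := by rw [hCdef]; simp [Complex.conj_ofReal]
  have hconjR : conj Rc = Rc := by rw [hRdef]; simp [Complex.conj_ofReal]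
  have hconjD : ∀ n, conj (D n) = D n := by
    intro n; rw [hDdef]
    simp only [map_div₀, map_sub, map_pow, hconjC, hconjR]
  -- entry normal forms
  have hF : ∀ k j : ℕ, 1 ≤ j → j ≤ k →
      B k j = (-(conj q))^(k-j) * C * (C^(k+j))⁻¹ * D j := by
    intro k j h1 h2
    rw [hB k j h1 h2]
    have p1 : ((-1:ℂ))^(j+k) * (conj q)^(k-j) = (-(conj q))^(k-j) := by
      rw [show j + k = (k-j) + 2*j from by omega, pow_add, pow_mul, neg_one_sq, one_pow,
        mul_one, ← neg_pow]
    have p2 : (c₀:ℂ) ^ (2 * (1 - (k:ℤ) - (j:ℤ))) = C * (C^(k+j))⁻¹ := by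
      rw [show (2 * (1 - (k:ℤ) - (j:ℤ))) = ((2:ℕ):ℤ) - ((2*(k+j) : ℕ) : ℤ) from by push_cast; ring,
        zpow_sub₀ hc, div_eq_mul_inv, zpow_natCast, zpow_natCast, hCdef, ← pow_mul]
    have p3 : (c₀:ℂ)^(4*j) = C^(2*j) := by rw [hCdef, ← pow_mul]; ring_nf
    have p4 : ((‖q‖:ℝ):ℂ)^(2*j) = Rc^j := by rw [hRdef, ← pow_mul]
    have p5 : (c₀:ℂ)^4 = C^2 := by rw [hCdef]; ring
    rw [p2, p3, p4, p5, ← hRdef, hDdef, ← p1]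
    ring
  have hFup : ∀ m j : ℕ, 1 ≤ m → m < j →
      B m j = (-q)^(j-m) * C * (C^(j+m))⁻¹ * D m := by
    intro m j h1 h2
    rw [hBsym m j h1 h2, hF j m h1 h2.le]
    simp only [map_mul, map_pow, map_neg, map_inv₀, hconjC, hconjD, Complex.conj_conj]
  -- D facts
  have hD1 : D 1 = 1 := by
    rw [hDdef]; show (C^(2*1) - Rc^1) / (C^2 - Rc) = 1
    norm_num
    exact hden
  have hDrec : ∀ n : ℕ, D (n+1) = C^2 * D n + Rc^n := by
    intro n; rw [hDdef]
    show (C^(2*(n+1)) - Rc^(n+1)) / (C^2 - Rc) = C^2 * ((C^(2*n) - Rc^n) / (C^2 - Rc)) + Rc^n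
    field_simp
    ring
  have hDd : ∀ n : ℕ, (C^2 - q * conj q) * D (n+1) = C^(2*n+2) - Rc^(n+1) := by
    intro n; rw [hqq, hDdef]
    show (C^2 - Rc) * ((C^(2*(n+1)) - Rc^(n+1)) / (C^2 - Rc)) = C^(2*n+2) - Rc^(n+1)
    rw [mul_div_cancel₀ _ hden, show 2*(n+1) = 2*n+2 from by ring]
  -- bracket identities
  have hRow : ∀ j a : ℕ, 1 ≤ j → j ≤ a →
      conj q * B a j + B (a+1) j + q * B (a+2) j = 0 := by
    intro j a h1 h2
    obtain ⟨m, rfl⟩ : ∃ m, a = j + m := ⟨a - j, by omega⟩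
    rw [hF (j+m) j h1 (by omega), hF (j+m+1) j h1 (by omega), hF (j+m+2) j h1 (by omega),
      show j+m-j = m from by omega, show j+m+1-j = m+1 from by omega,
      show j+m+2-j = m+2 from by omega]
    linear_combination l_caseA q (conj q) C (D j) hC hCR m (j+m+j)
  have hDiagL : ∀ n : ℕ, conj q * B (n+1) (n+2) + B (n+2) (n+2) + q * B (n+3) (n+2) = 1 := by
    intro n
    rw [hFup (n+1) (n+2) (by omega) (by omega), hF (n+2) (n+2) (by omega) (by omega),
      hF (n+3) (n+2) (by omega) (by omega),
      show n+2-(n+1) = 1 from by omega, show n+2-(n+2) = 0 from by omega,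
      show n+3-(n+2) = 1 from by omega, hDrec (n+1)]
    have := l_diag q (conj q) C (D (n+1)) (Rc^(n+1)) hC hCR n (hDd n)
    linear_combination this
  have hDiag1 : B 1 1 + q * B 2 1 = 1 := by
    rw [hF 1 1 le_rfl le_rfl, hF 2 1 le_rfl (by omega), hD1]
    have := l_diag1 q (conj q) C hC hCR
    linear_combination this
  have hColD : ∀ a j : ℕ, 1 ≤ a → a + 2 ≤ j →
      conj q * B a j + B (a+1) j + q * B (a+2) j = 0 := by
    intro a j h1 h2
    obtain ⟨n, rfl⟩ : ∃ n, a = n + 1 := ⟨a - 1, by omega⟩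
    have hr2 : Rc^(n+2) = q * conj q * Rc^(n+1) := by rw [hqq]; ring
    rcases eq_or_lt_of_le h2 with h3 | h3
    · -- j = n+3
      subst h3
      rw [hFup (n+1) (n+1+2) (by omega) (by omega), hFup (n+2) (n+1+2) (by omega) (by omega),
        hF (n+1+2) (n+1+2) (by omega) (by omega),
        show n+1+2-(n+1) = 2 from by omega, show n+1+2-(n+2) = 1 from by omega,
        show n+1+2-(n+1+2) = 0 from by omega, hDrec (n+2), hDrec (n+1), hr2]
      have := l_col q (conj q) C (D (n+1)) (Rc^(n+1)) hC hCR 0 ((n+1+2)+(n+1))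
      linear_combination this
    · -- j ≥ n+4
      obtain ⟨p, rfl⟩ : ∃ p, j = n+4+p := ⟨j - (n+4), by omega⟩
      rw [hFup (n+1) (n+4+p) (by omega) (by omega), hFup (n+2) (n+4+p) (by omega) (by omega),
        hFup (n+3) (n+4+p) (by omega) (by omega),
        show n+4+p-(n+1) = p+3 from by omega, show n+4+p-(n+2) = p+2 from by omega,
        show n+4+p-(n+3) = p+1 from by omega, hDrec (n+2), hDrec (n+1), hr2]
      have := l_col q (conj q) C (D (n+1)) (Rc^(n+1)) hC hCR (p+1) ((n+4+p)+(n+1))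
      linear_combination this
  have hJ1 : ∀ j : ℕ, 2 ≤ j → B 1 j + q * B 2 j = 0 := by
    intro j h2
    have hr1 : Rc = q * conj q := hqq.symm
    rcases eq_or_lt_of_le h2 with h3 | h3
    · subst h3
      rw [hFup 1 2 (by omega) (by omega), hF 2 2 (by omega) (by omega),
        show 2-1 = 1 from by omega, show 2-2 = 0 from by omega,
        hDrec 1, hD1, hr1]
      have := l_col1 q (conj q) C hC hCR 0 3
      linear_combination this
    · obtain ⟨p, rfl⟩ : ∃ p, j = p+3 := ⟨j - 3, by omega⟩
      rw [hFup 1 (p+3) (by omega) (by omega), hFup 2 (p+3) (by omega) (by omega),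
        show p+3-1 = p+2 from by omega, show p+3-2 = p+1 from by omega,
        hDrec 1, hD1, hr1]
      have := l_col1 q (conj q) C hC hCR (p+1) (p+3+1)
      linear_combination this
  -- first sums
  have main1 : ∀ k j : ℕ, 1 ≤ k → 1 ≤ j →
      HasSum (fun m : ℕ => G k (m + 1) * B (m + 1) j) (if k = j then 1 else 0) := by
    intro k j hk hj
    obtain ⟨a, rfl⟩ : ∃ a, k = a + 1 := ⟨k - 1, by omega⟩
    match a with
    | 0 =>
      have hv : ∀ m ∉ ({0, 1} : Finset ℕ), G 1 (m+1) * B (m+1) j = 0 := by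
        intro m hm
        simp only [Finset.mem_insert, Finset.mem_singleton] at hm
        push_neg at hm
        rw [hG, if_neg (by omega), if_neg (by omega), if_neg (by omega), zero_mul]
      have hsum : HasSum _ _ := hasSum_sum_of_ne_finset_zero hv
      have hval : (∑ b ∈ ({0,1} : Finset ℕ), G 1 (b+1) * B (b+1) j)
          = (if 0 + 1 = j then 1 else 0) := by
        rw [Finset.sum_insert (by simp), Finset.sum_singleton,
          hG 1 1, hG 1 2, if_pos rfl, if_neg (by omega), if_pos rfl]
        rcases eq_or_lt_of_le hj with h1 | h1
        · rw [if_pos (by omega), ← h1]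
          simpa using hDiag1
        · rw [if_neg (by omega)]
          simpa using hJ1 j (by omega)
      rwa [hval] at hsum
    | Nat.succ n =>
      have hv : ∀ m ∉ ({n, n+1, n+2} : Finset ℕ), G (n+2) (m+1) * B (m+1) j = 0 := by
        intro m hm
        simp only [Finset.mem_insert, Finset.mem_singleton] at hm
        push_neg at hm
        rw [hG, if_neg (by omega), if_neg (by omega), if_neg (by omega), zero_mul]
      have hsum : HasSum _ _ := hasSum_sum_of_ne_finset_zero hv
      have hval : (∑ b ∈ ({n, n+1, n+2} : Finset ℕ), G (n+2) (b+1) * B (b+1) j)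
          = (if n + 1 + 1 = j then 1 else 0) := by
        rw [Finset.sum_insert (by simp), Finset.sum_insert (by simp), Finset.sum_singleton,
          hG (n+2) (n+1), hG (n+2) (n+2), hG (n+2) (n+3),
          if_neg (by omega), if_neg (by omega), if_pos rfl,
          if_pos rfl,
          if_neg (by omega), if_pos rfl]
        rw [one_mul, ← add_assoc]
        rcases lt_trichotomy j (n+2) with h1 | h1 | h1
        · rw [if_neg (by omega)]
          exact hRow j (n+1) hj (by omega)
        · subst h1
          rw [if_pos (by omega)]
          exact hDiagL n
        · rw [if_neg (by omega)]
          exact hColD (n+1) j (by omega) (by omega)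
      rwa [hval] at hsum
  intro k j hk hj
  refine ⟨main1 k j hk hj, ?_⟩
  -- hermitian transfer
  have hBh : ∀ m : ℕ, 1 ≤ m → B k m = conj (B m k) := by
    intro m hm
    rcases lt_trichotomy m k with h | h | h
    · rw [hBsym m k hm h, Complex.conj_conj]
    · subst h
      rw [hF m m hm le_rfl]
      simp only [map_mul, map_pow, map_neg, map_inv₀, hconjC, hconjD, Complex.conj_conj, Nat.sub_self, pow_zero, map_one]
    · exact hBsym k m hk h
  have hGh : ∀ a b : ℕ, G a b = conj (G b a) := by
    intro a b
    rw [hG a b, hG b a]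
    rcases eq_or_ne a b with rfl | hab
    · simp
    rcases eq_or_ne b (a+1) with rfl | h2
    · rw [if_neg hab, if_pos rfl, if_neg (Ne.symm hab), if_neg (by omega), if_pos rfl,
        Complex.conj_conj]
    rcases eq_or_ne a (b+1) with rfl | h3
    · rw [if_neg hab, if_neg h2, if_pos rfl, if_neg (Ne.symm hab), if_pos rfl]
    · rw [if_neg hab, if_neg h2, if_neg h3, if_neg (Ne.symm hab), if_neg h3, if_neg h2,
        map_zero]
  have h1 := main1 j k hj hk
  have h3 : HasSum (fun m : ℕ => conj (G j (m+1) * B (m+1) k)) (conj (if j = k then 1 else 0)) := by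
    exact h1.map (starRingEnd ℂ) continuous_conj
  have hfun : (fun m : ℕ => B k (m+1) * G (m+1) j)
      = fun m : ℕ => conj (G j (m+1) * B (m+1) k) := by
    funext m
    rw [map_mul, ← hGh (m+1) j, ← hBh (m+1) (by omega), mul_comm]
  have hval2 : conj (if j = k then 1 else 0 : ℂ) = (if k = j then 1 else 0 : ℂ) := by
    rcases eq_or_ne j k with rfl | h
    · simp
    · rw [if_neg h, if_neg (Ne.symm h), map_zero]
  rw [hfun, ← hval2]
  exact h3
end

section
/- (Szegő condition for fractional Gaussian noise.) For every H ∈ (0,1), the spectral density φ_H(t) = 4 C(H) sin²(πt) (ζ(2H+1, t) + ζ(2H+1, 1−t)), with C(H) = −ζ(−2H)/(2ζ(1+2H)), satisfies φ_H(t) > 0 for all t ∈ (0,1) and ∫₀¹ |log φ_H(t)| dt < ∞; in particular ∫₀¹ log φ_H(t) dt > −∞, so the Szegő function of φ_H is well defined. -/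
open MeasureTheory Complex Filter ComplexConjugate

/-- Hurwitz zeta function `ζ(s, x) = Σ_{n=0}^∞ (n + x)^{−s}` (convergent for s > 1, x ∈ (0,1]). -/
noncomputable def hurwitzZetaSum (s x : ℝ) : ℝ := ∑' n : ℕ, ((n : ℝ) + x) ^ (-s)

lemma hz_summable {s x : ℝ} (hs : 1 < s) (hx : 0 < x) :
    Summable (fun n : ℕ => ((n : ℝ) + x) ^ (-s)) := by
  set m : ℝ := min x 1 with hm
  have hm0 : 0 < m := lt_min hx one_pos
  have h1 : Summable (fun n : ℕ => ((n : ℝ) + 1) ^ (-s)) := by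
    have h0 : Summable (fun n : ℕ => (n : ℝ) ^ (-s)) :=
      Real.summable_nat_rpow.2 (by linarith)
    have := (summable_nat_add_iff (f := fun n : ℕ => (n : ℝ) ^ (-s)) 1).2 h0
    refine this.congr fun n => ?_
    push_cast
    ring_nf
  refine Summable.of_nonneg_of_le (fun n => Real.rpow_nonneg (by positivity) _)
    (fun n => ?_) (h1.mul_left (m ^ (-s)))
  have hle : ((n : ℝ) + 1) * m ≤ (n : ℝ) + x := by
    rcases min_le_iff.1 (le_refl m) with h | h
    · rcases le_total x 1 with hx1 | hx1
      · have : m = x := by simp [hm, hx1]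
        rw [this]; nlinarith [Nat.cast_nonneg (α := ℝ) n]
      · have : m = 1 := by simp [hm, hx1]
        rw [this]; nlinarith
    · rcases le_total x 1 with hx1 | hx1
      · have : m = x := by simp [hm, hx1]
        rw [this]; nlinarith [Nat.cast_nonneg (α := ℝ) n]
      · have : m = 1 := by simp [hm, hx1]
        rw [this]; nlinarith
  calc ((n : ℝ) + x) ^ (-s) ≤ (((n : ℝ) + 1) * m) ^ (-s) :=
        Real.rpow_le_rpow_of_nonpos (by positivity) hle (by linarith)
    _ = m ^ (-s) * ((n : ℝ) + 1) ^ (-s) := by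
        rw [Real.mul_rpow (by positivity) hm0.le, mul_comm]

lemma hz_nonneg {s x : ℝ} (hx : 0 ≤ x) : 0 ≤ hurwitzZetaSum s x :=
  tsum_nonneg fun n => Real.rpow_nonneg (by positivity) _

lemma hz_lower {s x : ℝ} (hs : 1 < s) (hx : 0 < x) :
    x ^ (-s) ≤ hurwitzZetaSum s x := by
  have h := Summable.le_tsum (hz_summable hs hx) 0
    (fun j _ => Real.rpow_nonneg (by positivity) _)
  simpa [hurwitzZetaSum] using h

lemma hz_upper {s x : ℝ} (hs : 1 < s) (hx : 0 < x) :
    hurwitzZetaSum s x ≤ x ^ (-s) + hurwitzZetaSum s 1 := by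
  rw [hurwitzZetaSum, Summable.tsum_eq_zero_add (hz_summable hs hx)]
  have h0 : (((0 : ℕ) : ℝ) + x) ^ (-s) = x ^ (-s) := by norm_num
  rw [h0]
  gcongr
  have hsum1 : Summable (fun n : ℕ => (((n + 1 : ℕ) : ℝ) + x) ^ (-s)) := by
    refine (hz_summable hs (x := 1 + x) (by linarith)).congr fun n => ?_
    push_cast
    ring_nf
  refine Summable.tsum_le_tsum (fun n => ?_) hsum1 (hz_summable hs one_pos)
  push_cast
  exact Real.rpow_le_rpow_of_nonpos (by positivity) (by linarith) (by linarith)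

lemma hz_antitoneOn {s : ℝ} (hs : 1 < s) :
    AntitoneOn (hurwitzZetaSum s) (Set.Ioi 0) := by
  intro x hx y hy hxy
  have hx' : (0:ℝ) < x := hx
  have hy' : (0:ℝ) < y := hy
  refine Summable.tsum_le_tsum (fun n => Real.rpow_le_rpow_of_nonpos (by positivity)
    (by linarith) (by linarith)) (hz_summable hs hy') (hz_summable hs hx')

lemma sin_pi_mul_ge {t : ℝ} (h0 : 0 ≤ t) (h1 : t ≤ 1) :
    t * (1 - t) ≤ Real.sin (Real.pi * t) := by
  have key : ∀ u : ℝ, 0 ≤ u → u ≤ 1/2 → u ≤ Real.sin (Real.pi * u) := by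
    intro u hu hu2
    have hcc := strictConcaveOn_sin_Icc.concaveOn.2
      (show (0:ℝ) ∈ Set.Icc 0 Real.pi from ⟨le_refl 0, Real.pi_pos.le⟩)
      (show Real.pi / 2 ∈ Set.Icc 0 Real.pi from
        ⟨by positivity, by linarith [Real.pi_pos]⟩)
      (show (0:ℝ) ≤ 1 - 2*u by linarith) (show (0:ℝ) ≤ 2*u by linarith)
      (by ring)
    have harg : (1 - 2*u) • (0:ℝ) + (2*u) • (Real.pi / 2) = Real.pi * u := by
      simp [smul_eq_mul]; ring
    rw [harg] at hcc
    have : (1 - 2*u) • Real.sin 0 + (2*u) • Real.sin (Real.pi/2) = 2*u := by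
      simp [smul_eq_mul]
    rw [this] at hcc
    linarith
  rcases le_total t (1/2) with ht | ht
  · have := key t h0 ht
    nlinarith
  · have h2 : Real.sin (Real.pi * t) = Real.sin (Real.pi * (1 - t)) := by
      rw [show Real.pi * (1 - t) = Real.pi - Real.pi * t by ring, Real.sin_pi_sub]
    have := key (1 - t) (by linarith) (by linarith)
    rw [← h2] at this
    nlinarith

lemma neg_log_le_rpow {x : ℝ} (hx : 0 < x) :
    -Real.log x ≤ 2 * x ^ (-(1/2) : ℝ) := by
  have h1 : Real.log (x ^ (-(1/2) : ℝ)) = -(1/2) * Real.log x := Real.log_rpow hx _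
  have h2 : Real.log (x ^ (-(1/2) : ℝ)) ≤ x ^ (-(1/2) : ℝ) - 1 :=
    Real.log_le_sub_one_of_pos (Real.rpow_pos_of_pos hx _)
  linarith

lemma zeta_real_eq {H : ℝ} (hH : H ∈ Set.Ioo (0:ℝ) 1) :
    riemannZeta (1 + 2 * (H : ℂ)) = ((hurwitzZetaSum (2*H+1) 1 : ℝ) : ℂ) := by
  obtain ⟨h0, h1⟩ := hH
  rw [zeta_eq_tsum_one_div_nat_add_one_cpow (by simp; linarith)]
  rw [hurwitzZetaSum, Complex.ofReal_tsum]
  congr 1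
  funext n
  have hb : (0:ℝ) ≤ (n : ℝ) + 1 := by positivity
  rw [show (((n:ℝ) + 1) ^ (-(2*H+1)) : ℝ) = (((n:ℝ)+1) ^ ((-(2*H+1)) : ℝ) : ℝ) from rfl,
    Complex.ofReal_cpow hb]
  push_cast
  rw [Complex.cpow_neg]
  rw [show ((2:ℂ)*H + 1) = 1 + 2*(H:ℂ) by ring]
  rw [one_div]

lemma zeta_neg_eq {H : ℝ} (hH : H ∈ Set.Ioo (0:ℝ) 1) :
    riemannZeta (-(2 * (H : ℂ))) =
      ((2 * (2*Real.pi) ^ (-(1+2*H) : ℝ) * Real.Gamma (1+2*H) * (-Real.sin (Real.pi*H)) *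
        hurwitzZetaSum (2*H+1) 1 : ℝ) : ℂ) := by
  obtain ⟨h0, h1⟩ := hH
  have hfe := riemannZeta_one_sub (s := 1 + 2*(H:ℂ))
    (fun n => by
      intro h
      have := congrArg Complex.re h
      simp at this
      have hn : (0:ℝ) ≤ (n:ℝ) := Nat.cast_nonneg n
      linarith)
    (by
      intro h
      have := congrArg Complex.re h
      simp at this
      linarith)
  rw [show (1 : ℂ) - (1 + 2*(H:ℂ)) = -(2*(H:ℂ)) by ring] at hfe
  rw [hfe, zeta_real_eq ⟨h0, h1⟩]
  have e1 : (2 * (Real.pi : ℂ)) ^ (-(1 + 2*(H:ℂ))) =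
      (((2*Real.pi) ^ (-(1+2*H) : ℝ) : ℝ) : ℂ) := by
    rw [Complex.ofReal_cpow (by positivity)]
    push_cast
    ring_nf
  have e2 : Complex.Gamma (1 + 2*(H:ℂ)) = ((Real.Gamma (1+2*H) : ℝ) : ℂ) := by
    rw [show (1 + 2*(H:ℂ)) = ((1+2*H : ℝ) : ℂ) by push_cast; ring, Complex.Gamma_ofReal]
  have e3 : Complex.cos ((Real.pi : ℂ) * (1 + 2*(H:ℂ)) / 2) =
      ((-Real.sin (Real.pi * H) : ℝ) : ℂ) := by
    rw [show ((Real.pi : ℂ) * (1 + 2*(H:ℂ)) / 2) = ((Real.pi * H + Real.pi/2 : ℝ) : ℂ) by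
      push_cast; ring]
    rw [← Complex.ofReal_cos, Real.cos_add_pi_div_two]
  rw [e1, e2, e3]
  push_cast
  ring

lemma C_pos {H : ℝ} (hH : H ∈ Set.Ioo (0:ℝ) 1) {C : ℝ}
    (hC : (C : ℂ) = -riemannZeta (-(2 * (H : ℂ))) / (2 * riemannZeta (1 + 2 * (H : ℂ)))) :
    0 < C := by
  obtain ⟨h0, h1⟩ := hH
  set A : ℝ := hurwitzZetaSum (2*H+1) 1 with hA
  have hA1 : 1 ≤ A := by
    have := hz_lower (s := 2*H+1) (x := 1) (by linarith) one_pos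
    simpa using this
  set b : ℝ := 2 * (2*Real.pi) ^ (-(1+2*H) : ℝ) * Real.Gamma (1+2*H) *
      (-Real.sin (Real.pi*H)) * A with hb
  have hbneg : b < 0 := by
    have hpow : (0:ℝ) < (2*Real.pi) ^ (-(1+2*H) : ℝ) :=
      Real.rpow_pos_of_pos (by positivity) _
    have hGamma : (0:ℝ) < Real.Gamma (1+2*H) := Real.Gamma_pos_of_pos (by linarith)
    have hsin : (0:ℝ) < Real.sin (Real.pi * H) :=
      Real.sin_pos_of_pos_of_lt_pi (by positivity)
        (by nlinarith [Real.pi_pos])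
    have heq : b = -(2 * (2*Real.pi) ^ (-(1+2*H) : ℝ) * Real.Gamma (1+2*H) *
        Real.sin (Real.pi*H) * A) := by rw [hb]; ring
    rw [heq]
    refine neg_lt_zero.mpr ?_
    have : (0:ℝ) < A := by linarith
    positivity
  rw [zeta_neg_eq ⟨h0, h1⟩, zeta_real_eq ⟨h0, h1⟩] at hC
  have hC' : (C : ℂ) = ((-b / (2*A) : ℝ) : ℂ) := by
    rw [hC, hb, hA]
    push_cast
    ring
  have hCr : C = -b / (2*A) := by exact_mod_cast hC'
  rw [hCr]
  have hA0 : (0:ℝ) < A := by linarith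
  exact div_pos (by linarith) (by linarith)


set_option maxHeartbeats 2000000 in
/-- Szegő condition for fractional Gaussian noise: for every H ∈ (0,1) the
spectral density `φ_H(t) = 4 C(H) sin²(πt) (ζ(2H+1, t) + ζ(2H+1, 1−t))`, with
`C(H) = −ζ(−2H)/(2ζ(1+2H))`, is strictly positive on (0,1) and `∫₀¹ |log φ_H| < ∞`;
in particular the Szegő function of `φ_H` is well defined. -/
theorem fgn_szego_condition (H : ℝ) (hH : H ∈ Set.Ioo (0:ℝ) 1)
    (C : ℝ) (hC : (C : ℂ) = -riemannZeta (-(2 * (H : ℂ))) / (2 * riemannZeta (1 + 2 * (H : ℂ))))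
    (φH : ℝ → ℝ)
    (hφH : ∀ t : ℝ, φH t = 4 * C * Real.sin (Real.pi * t) ^ 2 *
      (hurwitzZetaSum (2 * H + 1) t + hurwitzZetaSum (2 * H + 1) (1 - t))) :
    (∀ t ∈ Set.Ioo (0:ℝ) 1, 0 < φH t) ∧
    IntervalIntegrable (fun t => |Real.log (φH t)|) volume 0 1 ∧
    IntervalIntegrable (fun t => Real.log (φH t)) volume 0 1 := by
  obtain ⟨h0, h1⟩ := hH
  set s : ℝ := 2*H + 1 with hsdef
  have hs : 1 < s := by rw [hsdef]; linarith
  have hs4 : s ≤ 4 := by rw [hsdef]; linarith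
  clear_value s
  have hCpos : 0 < C := C_pos ⟨h0, h1⟩ hC
  clear hC
  set ζR : ℝ := hurwitzZetaSum s 1 with hζRdef
  have hζR1 : 1 ≤ ζR := by
    have := hz_lower (s := s) (x := 1) hs one_pos
    simpa using this
  set M : ℝ := 2 + 2*ζR with hMdef
  clear_value ζR
  have hM1 : 1 ≤ M := by linarith
  have key : ∀ t ∈ Set.Ioo (0:ℝ) 1,
      0 < φH t ∧
      Real.log (4*C) + 2*Real.log t + 2*Real.log (1-t) ≤ Real.log (φH t) ∧
      Real.log (φH t) ≤ Real.log (4*C) + Real.log M +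
        s*(-Real.log t) + s*(-Real.log (1-t)) := by
    rintro t ⟨ht0, ht1⟩
    have ht1' : (0:ℝ) < 1 - t := by linarith
    set u : ℝ := t ^ (-s) with hu
    set v : ℝ := (1-t) ^ (-s) with hv
    have hu1 : (1:ℝ) ≤ u :=
      Real.one_le_rpow_of_pos_of_le_one_of_nonpos ht0 (by linarith) (by linarith)
    have hv1 : (1:ℝ) ≤ v :=
      Real.one_le_rpow_of_pos_of_le_one_of_nonpos ht1' (by linarith) (by linarith)
    set Z : ℝ := hurwitzZetaSum s t + hurwitzZetaSum s (1-t) with hZ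
    have hZlow : 1 ≤ Z := by
      have l1 := hz_lower hs ht0
      have l2 := hz_nonneg (s := s) (x := 1-t) ht1'.le
      rw [hZ]; rw [← hu] at l1; linarith
    have hZup : Z ≤ M * (u*v) := by
      have u1 := hz_upper hs ht0
      have u2 := hz_upper hs ht1'
      rw [← hu, ← hζRdef] at u1
      rw [← hv, ← hζRdef] at u2
      have huv : (1:ℝ) ≤ u*v := by nlinarith
      rw [hZ] at *
      rw [hMdef]
      nlinarith [mul_nonneg (sub_nonneg.2 hu1) (sub_nonneg.2 hv1),
        mul_nonneg (show (0:ℝ) ≤ 2*ζR by linarith) (sub_nonneg.2 huv)]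
    clear_value Z
    have hsin : t*(1-t) ≤ Real.sin (Real.pi * t) := sin_pi_mul_ge ht0.le (by linarith)
    have hsin0 : 0 < Real.sin (Real.pi * t) := lt_of_lt_of_le (by nlinarith) hsin
    have hsin1 : Real.sin (Real.pi * t) ≤ 1 := Real.sin_le_one _
    have hφeq := hφH t
    rw [← hZ] at hφeq
    have h4C : (0:ℝ) ≤ 4*C := by linarith
    have hZ0 : (0:ℝ) ≤ Z := by linarith
    have hu0 : (0:ℝ) < u := by linarith
    have hv0 : (0:ℝ) < v := by linarith
    have hM0 : (0:ℝ) < M := by linarith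
    have hsq : (t*(1-t))^2 ≤ Real.sin (Real.pi*t)^2 :=
      pow_le_pow_left₀ (by nlinarith) hsin 2
    have hlow : 4*C*(t*(1-t))^2 ≤ φH t := by
      rw [hφeq]
      have b1 : 4*C*(t*(1-t))^2 ≤ 4*C*Real.sin (Real.pi*t)^2 :=
        mul_le_mul_of_nonneg_left hsq h4C
      have b2 : 4*C*Real.sin (Real.pi*t)^2 ≤ 4*C*Real.sin (Real.pi*t)^2 * Z :=
        le_mul_of_one_le_right (mul_nonneg h4C (sq_nonneg _)) hZlow
      linarith
    have hlowpos : (0:ℝ) < 4*C*(t*(1-t))^2 := by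
      have h2 : (0:ℝ) < (t*(1-t))^2 := by positivity
      exact mul_pos (by linarith) h2
    have hpos : 0 < φH t := lt_of_lt_of_le hlowpos hlow
    have hup : φH t ≤ 4*C*(M*(u*v)) := by
      rw [hφeq]
      have c0 : 4*C*Real.sin (Real.pi*t)^2 ≤ 4*C := by
        have := Real.sin_sq_le_one (Real.pi*t)
        nlinarith
      have c1 : 4*C*Real.sin (Real.pi*t)^2*Z ≤ 4*C*Z :=
        mul_le_mul_of_nonneg_right c0 hZ0
      have c2 : 4*C*Z ≤ 4*C*(M*(u*v)) := mul_le_mul_of_nonneg_left hZup h4C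
      linarith
    refine ⟨hpos, ?_, ?_⟩
    · have hlog := Real.log_le_log hlowpos hlow
      have l1 : Real.log (4*C*(t*(1-t))^2) =
          Real.log (4*C) + Real.log ((t*(1-t))^2) :=
        Real.log_mul (by positivity) (by positivity)
      have l2 : Real.log ((t*(1-t))^2) = 2 * Real.log (t*(1-t)) := by
        rw [Real.log_pow]; push_cast; ring
      have l3 : Real.log (t*(1-t)) = Real.log t + Real.log (1-t) :=
        Real.log_mul ht0.ne' ht1'.ne'
      linarith
    · have hlog := Real.log_le_log hpos hup
      have l1 : Real.log (4*C*(M*(u*v))) = Real.log (4*C) + Real.log (M*(u*v)) :=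
        Real.log_mul (by positivity) (by positivity)
      have l2 : Real.log (M*(u*v)) = Real.log M + Real.log (u*v) :=
        Real.log_mul hM0.ne' (by positivity)
      have l3 : Real.log (u*v) = Real.log u + Real.log v :=
        Real.log_mul hu0.ne' hv0.ne'
      have l4 : Real.log u = -s * Real.log t := by rw [hu, Real.log_rpow ht0]
      have l5 : Real.log v = -s * Real.log (1-t) := by rw [hv, Real.log_rpow ht1']
      linarith
  set K : ℝ := |Real.log (4*C)| + Real.log M with hK
  clear_value M
  set a : ℝ := 2*(2+s) with ha
  clear_value K
  clear_value a
  set g : ℝ → ℝ := fun t => K + a * t ^ (-(1/2) : ℝ) + a * (1-t) ^ (-(1/2) : ℝ) with hg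
  have habs : ∀ t ∈ Set.Ioo (0:ℝ) 1, |Real.log (φH t)| ≤ g t := by
    rintro t ht
    obtain ⟨ht0, ht1⟩ := ht
    have ht1' : (0:ℝ) < 1 - t := by linarith
    obtain ⟨-, hl, hr⟩ := key t ⟨ht0, ht1⟩
    clear key hφH
    have hP1 : 0 ≤ -Real.log t := by
      have := Real.log_neg ht0 ht1; linarith
    have hP2 : 0 ≤ -Real.log (1-t) := by
      have := Real.log_neg ht1' (by linarith); linarith
    have hlogM : 0 ≤ Real.log M := Real.log_nonneg hM1
    have habs1 : |Real.log (φH t)| ≤ K + (2+s)*(-Real.log t) + (2+s)*(-Real.log (1-t)) := by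
      rw [abs_le]
      constructor
      · have h2 := neg_abs_le (Real.log (4*C))
        rw [hK]
        have e1 : (2:ℝ) ≤ 2 + s := by linarith
        nlinarith [mul_le_mul_of_nonneg_right e1 hP1, mul_le_mul_of_nonneg_right e1 hP2]
      · have h2 := le_abs_self (Real.log (4*C))
        rw [hK]
        have e1 : s ≤ 2 + s := by linarith
        nlinarith [mul_le_mul_of_nonneg_right e1 hP1, mul_le_mul_of_nonneg_right e1 hP2]
    have e1 := neg_log_le_rpow ht0
    have e2 := neg_log_le_rpow ht1'
    have hs2 : (0:ℝ) ≤ 2 + s := by linarith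
    have c1 : (2+s)*(-Real.log t) ≤ (2+s)*(2 * t ^ (-(1/2):ℝ)) :=
      mul_le_mul_of_nonneg_left e1 hs2
    have c2 : (2+s)*(-Real.log (1-t)) ≤ (2+s)*(2 * (1-t) ^ (-(1/2):ℝ)) :=
      mul_le_mul_of_nonneg_left e2 hs2
    have b1 : (2+s)*(2 * t ^ (-(1/2):ℝ)) = a * t ^ (-(1/2):ℝ) := by
      rw [ha]; ring
    have b2 : (2+s)*(2 * (1-t) ^ (-(1/2):ℝ)) = a * (1-t) ^ (-(1/2):ℝ) := by
      rw [ha]; ring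
    have : |Real.log (φH t)| ≤ K + a * t ^ (-(1/2):ℝ) + a * (1-t) ^ (-(1/2):ℝ) := by
      linarith
    simpa [hg] using this
  -- integrability of g
  have hr2 : (-1:ℝ) < -(1/2) := by norm_num
  have i1 : IntervalIntegrable (fun t : ℝ => t ^ (-(1/2):ℝ)) volume 0 1 :=
    intervalIntegral.intervalIntegrable_rpow' hr2
  have i2 : IntervalIntegrable (fun t : ℝ => (1-t) ^ (-(1/2):ℝ)) volume 0 1 := by
    have := (intervalIntegral.intervalIntegrable_rpow' (a := 0) (b := 1) hr2).comp_sub_left 1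
    simpa using this.symm
  have hgint : IntervalIntegrable g volume 0 1 := by
    exact (intervalIntegrable_const.add (i1.const_mul a)).add (i2.const_mul a)
  -- measurability
  have m1 : AEMeasurable (fun t => hurwitzZetaSum s t) (volume.restrict (Set.Ioo (0:ℝ) 1)) :=
    aemeasurable_restrict_of_antitoneOn measurableSet_Ioo
      ((hz_antitoneOn hs).mono (fun x hx => hx.1))
  have m2 : AEMeasurable (fun t => hurwitzZetaSum s (1-t))
      (volume.restrict (Set.Ioo (0:ℝ) 1)) := by
    refine aemeasurable_restrict_of_monotoneOn measurableSet_Ioo ?_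
    intro x hx y hy hxy
    exact hz_antitoneOn hs (show (0:ℝ) < 1-y by linarith [hy.2])
      (show (0:ℝ) < 1-x by linarith [hx.2]) (by linarith)
  have hφmeas : AEMeasurable φH (volume.restrict (Set.Ioo (0:ℝ) 1)) := by
    have hc : Continuous fun t : ℝ => 4*C*Real.sin (Real.pi*t)^2 := by fun_prop
    refine ((hc.aemeasurable).mul (m1.add m2)).congr ?_
    exact ae_of_all _ fun t => (hφH t).symm
  have hlogmeas : AEStronglyMeasurable (fun t => Real.log (φH t))
      (volume.restrict (Set.Ioo (0:ℝ) 1)) :=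
    (Real.measurable_log.comp_aemeasurable hφmeas).aestronglyMeasurable
  have hgOn : IntegrableOn g (Set.Ioo (0:ℝ) 1) volume :=
    (intervalIntegrable_iff_integrableOn_Ioo_of_le zero_le_one).1 hgint
  have hlogint : IntervalIntegrable (fun t => Real.log (φH t)) volume 0 1 := by
    rw [intervalIntegrable_iff_integrableOn_Ioo_of_le zero_le_one]
    refine Integrable.mono' hgOn hlogmeas ?_
    refine (ae_restrict_iff' measurableSet_Ioo).2 (ae_of_all _ fun t ht => ?_)
    rw [Real.norm_eq_abs]
    exact habs t ht
  exact ⟨fun t ht => (key t ht).1, hlogint.abs, hlogint⟩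
end
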